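/- Let H be a complex Hilbert space with inner product ⟨·,·⟩ conjugate-linear in the first argument, A a unitary operator on H, and φ₀ ∈ H. Let f be an integrable real-valued function on [0,2π) whose Fourier coefficients satisfy (1/2π)∫₀^{2π} f(p) e^{-ijp} dp = ⟨A^j φ₀, φ₀⟩ for all j ∈ ℤ, and let g be a real-valued integrable function on [0,2π) with f(p)·g(p) = 1 for almost every p, whose Fourier coefficients c_l = (1/2π)∫₀^{2π} g(p) e^{-ilp} dp satisfy Σ_{l∈ℤ}|c_l| < ∞. Define X = Σ_{k∈ℤ} c_k A^k (norm-convergent) and Ψ_n = A^n X φ₀ for n ∈ ℤ. Then ⟨Ψ_n, A^k φ₀⟩ = δ_{n,k} for all n, k ∈ ℤ, i.e. the family {Ψ_n} is biorthogonal to the family {A^k φ₀}. -/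

import Mathlib

open MeasureTheory Complex Set
open scoped InnerProductSpace


lemma norm_myexp (m : ℤ) (q : ℝ) : ‖Complex.exp (-Complex.I * m * q)‖ = 1 := by
  rw [Complex.norm_exp]
  simp

lemma integral_myexp (m : ℤ) :
    ∫ q in Set.Ico (0:ℝ) (2 * Real.pi), Complex.exp (-Complex.I * m * q) =
      if m = 0 then (2 * Real.pi : ℂ) else 0 := by
  rcases eq_or_ne m 0 with rfl | hm
  · simp only [if_pos rfl, Int.cast_zero, mul_zero, zero_mul, Complex.exp_zero]
    rw [setIntegral_const]
    simp [Real.volume_Ico, ENNReal.toReal_ofReal (by positivity : (0:ℝ) ≤ 2*Real.pi)]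
    simp [max_eq_left (by positivity : (0:ℝ) ≤ 2*Real.pi)]
  · rw [if_neg hm]
    rw [Measure.restrict_congr_set Ico_ae_eq_Ioc,
      ← intervalIntegral.integral_of_le (by positivity : (0:ℝ) ≤ 2 * Real.pi)]
    rw [integral_exp_mul_complex (by simp [hm, Complex.I_ne_zero] : (-Complex.I * m) ≠ 0)]
    have : Complex.exp (-Complex.I * m * (2 * Real.pi : ℝ)) = 1 := by
      have h2 := Complex.exp_int_mul_two_pi_mul_I (-m)
      rw [← h2]
      congr 1
      push_cast
      ring
    rw [this]
    simp


lemma vanish_of_fourier_zero {v : ℝ → ℂ}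
    (hv : IntegrableOn v (Set.Ico 0 (2 * Real.pi)))
    (h0 : ∀ j : ℤ, ∫ q in Set.Ico (0:ℝ) (2 * Real.pi),
        v q * Complex.exp (-Complex.I * j * q) = 0) :
    ∀ᵐ q ∂(volume.restrict (Set.Ico (0:ℝ) (2 * Real.pi))), v q = 0 := by
  haveI : Fact (0 < 2 * Real.pi) := ⟨by positivity⟩
  set S : Set ℝ := Set.Ico 0 (2 * Real.pi) with hS
  -- integrability of v against continuous functions on the circle
  have hint : ∀ h : C(AddCircle (2 * Real.pi), ℂ),
      IntegrableOn (fun q : ℝ => h ↑q * v q) S := by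
    intro h
    exact hv.bdd_mul ((h.continuous.comp (AddCircle.continuous_mk' _)).aestronglyMeasurable)
      (Filter.Eventually.of_forall fun x => h.norm_coe_le_norm _)
  -- the functional
  set Λ : C(AddCircle (2 * Real.pi), ℂ) →ₗ[ℂ] ℂ :=
    { toFun := fun h => ∫ q in S, h ↑q * v q
      map_add' := by
        intro h₁ h₂
        simp only [ContinuousMap.add_apply, add_mul]
        exact integral_add (hint h₁) (hint h₂)
      map_smul' := by
        intro a h
        simp only [ContinuousMap.smul_apply, smul_mul_assoc, RingHom.id_apply]
        exact integral_smul a _ } with hΛ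
  have hbound : ∀ h : C(AddCircle (2 * Real.pi), ℂ),
      ‖Λ h‖ ≤ (∫ q in S, ‖v q‖) * ‖h‖ := by
    intro h
    calc ‖∫ q in S, h ↑q * v q‖ ≤ ∫ q in S, ‖h ↑q * v q‖ :=
          norm_integral_le_integral_norm _
      _ ≤ ∫ q in S, ‖h‖ * ‖v q‖ := by
          refine integral_mono (hint h).norm (hv.norm.const_mul _) fun q => ?_
          rw [norm_mul]
          exact mul_le_mul_of_nonneg_right (h.norm_coe_le_norm _) (norm_nonneg _)
      _ = (∫ q in S, ‖v q‖) * ‖h‖ := by rw [integral_const_mul]; ring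
  set ΛL : C(AddCircle (2 * Real.pi), ℂ) →L[ℂ] ℂ :=
    LinearMap.mkContinuous Λ (∫ q in S, ‖v q‖) hbound with hΛL
  -- ΛL vanishes on fourier monomials
  have hfour : ∀ j : ℤ, ΛL (fourier j) = 0 := by
    intro j
    have : ∀ q : ℝ, (fourier j : C(AddCircle (2 * Real.pi), ℂ)) ↑q
        = Complex.exp (-Complex.I * (-j : ℤ) * q) := by
      intro q
      rw [fourier_coe_apply]
      congr 1
      have h2 : ((2 * Real.pi : ℝ) : ℂ) ≠ 0 := by
        simp [Real.pi_ne_zero]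
      have hpi : (Real.pi : ℂ) ≠ 0 := by
        exact_mod_cast Real.pi_ne_zero
      push_cast
      field_simp
    show (∫ q in S, (fourier j : C(AddCircle (2 * Real.pi), ℂ)) ↑q * v q) = 0
    calc (∫ q in S, (fourier j : C(AddCircle (2 * Real.pi), ℂ)) ↑q * v q)
        = ∫ q in S, v q * Complex.exp (-Complex.I * (-j : ℤ) * q) := by
          congr 1; funext q; rw [this q, mul_comm]
      _ = 0 := h0 (-j)
  -- ΛL vanishes everywhere by density
  have hall : ∀ h : C(AddCircle (2 * Real.pi), ℂ), ∫ q in S, h ↑q * v q = 0 := by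
    have hsub : (Submodule.span ℂ (Set.range (@fourier (2 * Real.pi))) : Set _)
        ⊆ ΛL ⁻¹' {0} := by
      intro x hx
      have : Submodule.span ℂ (Set.range (@fourier (2 * Real.pi))) ≤ LinearMap.ker (ΛL : C(AddCircle (2 * Real.pi), ℂ) →ₗ[ℂ] ℂ) := by
        rw [Submodule.span_le]
        rintro _ ⟨j, rfl⟩
        simpa using hfour j
      simpa using this hx
    have hclosure : closure (Submodule.span ℂ (Set.range (@fourier (2 * Real.pi))) : Set _)
        ⊆ ΛL ⁻¹' {0} :=
      closure_minimal hsub (isClosed_singleton.preimage ΛL.continuous)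
    intro h
    have hmem : h ∈ closure (Submodule.span ℂ (Set.range (@fourier (2 * Real.pi))) : Set _) := by
      have := span_fourier_closure_eq_top (T := 2 * Real.pi)
      rw [← Submodule.topologicalClosure_coe, this]
      trivial
    exact hclosure hmem
  -- test against smooth compactly supported functions
  have hae : ∀ᵐ x ∂volume, x ∈ Set.Ioo (0:ℝ) (2 * Real.pi) → v x = 0 := by
    refine isOpen_Ioo.ae_eq_zero_of_integral_contDiff_smul_eq_zero
      ((hv.mono_set Set.Ioo_subset_Ico_self).locallyIntegrableOn) ?_
    intro ψ hψ hψc hψs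
    have hzero : ∀ x, x ∉ S → ψ x • v x = 0 := by
      intro x hx
      have : ψ x = 0 := by
        apply image_eq_zero_of_notMem_tsupport
        intro hmem
        exact hx (Set.Ioo_subset_Ico_self (hψs hmem))
      simp [this]
    rw [← setIntegral_eq_integral_of_forall_compl_eq_zero hzero]
    have hψ0 : ψ 0 = 0 := by
      apply image_eq_zero_of_notMem_tsupport
      intro hmem
      exact absurd (hψs hmem).1 (lt_irrefl 0)
    have hψT : ψ (2 * Real.pi) = 0 := by
      apply image_eq_zero_of_notMem_tsupport
      intro hmem
      exact absurd (hψs hmem).2 (lt_irrefl _)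
    set h : C(AddCircle (2 * Real.pi), ℂ) :=
      ⟨AddCircle.liftIco (2 * Real.pi) 0 (fun x => (ψ x : ℂ)),
        AddCircle.liftIco_zero_continuous (by simp [hψ0, hψT])
          ((Complex.continuous_ofReal.comp hψ.continuous).continuousOn)⟩ with hh
    have := hall h
    rw [← this]
    refine setIntegral_congr_fun measurableSet_Ico fun q hq => ?_
    have hq' : h ↑q = (ψ q : ℂ) := by
      show AddCircle.liftIco (2 * Real.pi) 0 (fun x => (ψ x : ℂ)) ↑q = (ψ q : ℂ)
      exact AddCircle.liftIco_zero_coe_apply hq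
    rw [hq', Complex.real_smul, mul_comm]
  rw [hS, ← Measure.restrict_congr_set Ioo_ae_eq_Ico]
  exact (ae_restrict_iff' measurableSet_Ioo).2 hae


lemma norm_myexp' (l : ℤ) (q : ℝ) : ‖Complex.exp (Complex.I * l * q)‖ = 1 := by
  have := norm_myexp (-l) q
  rw [show -Complex.I * ((-l : ℤ) : ℂ) * q = Complex.I * l * q by push_cast; ring] at this
  exact this

lemma exp_combine (l j : ℤ) (q : ℝ) :
    Complex.exp (Complex.I * l * q) * Complex.exp (-Complex.I * j * q)
      = Complex.exp (-Complex.I * ((j - l : ℤ) : ℂ) * q) := by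
  rw [← Complex.exp_add]
  congr 1
  push_cast
  ring

lemma volS : (volume (Set.Ico (0:ℝ) (2 * Real.pi))).toReal = 2 * Real.pi := by
  rw [Real.volume_Ico]
  simp [ENNReal.toReal_ofReal (by positivity : (0:ℝ) ≤ 2 * Real.pi), Real.pi_pos.le]

lemma cont_myexp (j : ℤ) : Continuous fun q : ℝ => Complex.exp (-Complex.I * j * q) :=
  Complex.continuous_exp.comp (continuous_const.mul Complex.continuous_ofReal)

lemma cont_myexp' (l : ℤ) : Continuous fun q : ℝ => Complex.exp (Complex.I * l * q) :=
  Complex.continuous_exp.comp (continuous_const.mul Complex.continuous_ofReal)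

lemma expint (c₀ : ℂ) (j : ℤ) :
    IntegrableOn (fun q : ℝ => c₀ * Complex.exp (-Complex.I * j * q))
      (Set.Ico (0:ℝ) (2 * Real.pi)) :=
  (((cont_myexp j).integrableOn_Icc (μ := volume)
      (a := 0) (b := 2 * Real.pi)).mono_set Set.Ico_subset_Icc_self).const_mul c₀

theorem key_hasSum (f g : ℝ → ℝ)
    (hf : IntegrableOn f (Set.Ico 0 (2 * Real.pi)))
    (hg : IntegrableOn g (Set.Ico 0 (2 * Real.pi)))
    (hfg : ∀ᵐ p ∂(volume.restrict (Set.Ico (0:ℝ) (2 * Real.pi))), f p * g p = 1)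
    (c : ℤ → ℂ)
    (hc : ∀ l : ℤ, c l = (1 / (2 * Real.pi) : ℂ) *
        ∫ p in Set.Ico (0:ℝ) (2 * Real.pi), (g p : ℂ) * Complex.exp (-Complex.I * l * p))
    (hcsum : Summable fun l : ℤ => ‖c l‖) (m : ℤ) :
    HasSum (fun l : ℤ => c l *
        ∫ q in Set.Ico (0:ℝ) (2 * Real.pi), (f q : ℂ) * Complex.exp (-Complex.I * ((m - l : ℤ) : ℂ) * q))
      (if m = 0 then (2 * Real.pi : ℂ) else 0) := by
  haveI : Fact (0 < 2 * Real.pi) := ⟨by positivity⟩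
  set S : Set ℝ := Set.Ico 0 (2 * Real.pi) with hS
  have hSfin : volume S < ⊤ := by
    rw [hS, Real.volume_Ico]
    exact ENNReal.ofReal_lt_top
  have h2pi : ((2 * Real.pi : ℝ) : ℂ) ≠ 0 := by
    simp [Real.pi_ne_zero]
  -- the function G
  have hsumG : ∀ q : ℝ, Summable (fun l : ℤ => c l * Complex.exp (Complex.I * l * q)) := by
    intro q
    apply Summable.of_norm
    apply hcsum.congr
    intro l
    rw [norm_mul, norm_myexp', mul_one]
  set G : ℝ → ℂ := fun q => ∑' l : ℤ, c l * Complex.exp (Complex.I * l * q) with hG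
  have hGcont : Continuous G := by
    apply continuous_tsum (fun l => continuous_const.mul (cont_myexp' l)) hcsum
    intro l q
    rw [Pi.mul_apply, norm_mul, norm_myexp', mul_one]
  have hGbdd : ∀ q : ℝ, ‖G q‖ ≤ ∑' l : ℤ, ‖c l‖ := by
    intro q
    rw [hG]
    refine (norm_tsum_le_tsum_norm ?_).trans (le_of_eq (tsum_congr fun l => ?_))
    · apply hcsum.congr fun l => ?_
      rw [norm_mul, norm_myexp', mul_one]
    · rw [norm_mul, norm_myexp', mul_one]
  have hGint : IntegrableOn G S :=
    (hGcont.integrableOn_Icc (a := 0) (b := 2 * Real.pi)).mono_set Set.Ico_subset_Icc_self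
  -- Fourier coefficients of G are the c's
  have hGcoef : ∀ j : ℤ, ∫ q in S, G q * Complex.exp (-Complex.I * j * q)
      = (2 * Real.pi : ℂ) * c j := by
    intro j
    have hint : ∀ l : ℤ,
        Integrable (fun q : ℝ => c l * Complex.exp (-Complex.I * ((j - l : ℤ) : ℂ) * q))
          (volume.restrict S) := fun l => expint (c l) (j - l)
    have hsum : Summable fun l : ℤ =>
        ∫ q in S, ‖c l * Complex.exp (-Complex.I * ((j - l : ℤ) : ℂ) * q)‖ := by
      apply (hcsum.mul_right (2 * Real.pi)).congr
      intro l
      simp_rw [norm_mul, norm_myexp, mul_one]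
      rw [setIntegral_const, smul_eq_mul, measureReal_def, volS, mul_comm]
    have swap := integral_tsum_of_summable_integral_norm hint hsum
    have hptwise : ∀ q : ℝ, G q * Complex.exp (-Complex.I * j * q)
        = ∑' l : ℤ, c l * Complex.exp (-Complex.I * ((j - l : ℤ) : ℂ) * q) := by
      intro q
      rw [hG, ← tsum_mul_right]
      exact tsum_congr fun l => by rw [mul_assoc, exp_combine]
    calc ∫ q in S, G q * Complex.exp (-Complex.I * j * q)
        = ∫ q in S, ∑' l : ℤ, c l * Complex.exp (-Complex.I * ((j - l : ℤ) : ℂ) * q) := by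
          simp_rw [hptwise]
      _ = ∑' l : ℤ, ∫ q in S, c l * Complex.exp (-Complex.I * ((j - l : ℤ) : ℂ) * q) :=
          swap.symm
      _ = ∑' l : ℤ, c l * (if (j - l : ℤ) = 0 then (2 * Real.pi : ℂ) else 0) := by
          exact tsum_congr fun l => by rw [integral_const_mul, integral_myexp]
      _ = (2 * Real.pi : ℂ) * c j := by
          rw [tsum_eq_single j]
          · simp [mul_comm]
          · intro l hl
            rw [if_neg (by omega), mul_zero]
  -- the Fourier coefficients of g are also the c's
  have hgval : ∀ j : ℤ, ∫ q in S, (g q : ℂ) * Complex.exp (-Complex.I * j * q)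
      = (2 * Real.pi : ℂ) * c j := by
    intro j
    rw [hc j, ← mul_assoc]
    rw [show (2 * Real.pi : ℂ) * (1 / (2 * Real.pi : ℂ)) = 1 by
      rw [mul_one_div, div_self (by simp [Real.pi_ne_zero])]]
    rw [one_mul]
  -- integrability of products with exponentials
  have hgexpint : ∀ j : ℤ,
      Integrable (fun q : ℝ => (g q : ℂ) * Complex.exp (-Complex.I * j * q))
        (volume.restrict S) := by
    intro j
    refine (Integrable.bdd_mul hg.ofReal (cont_myexp j).aestronglyMeasurable
      (Filter.Eventually.of_forall fun q => le_of_eq (norm_myexp j q))).congr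
      (Filter.Eventually.of_forall fun q => mul_comm _ _)
  have hGexpint : ∀ j : ℤ,
      Integrable (fun q : ℝ => G q * Complex.exp (-Complex.I * j * q))
        (volume.restrict S) :=
    fun j => ((hGcont.mul (cont_myexp j)).integrableOn_Icc
      (a := 0) (b := 2 * Real.pi)).mono_set Set.Ico_subset_Icc_self
  -- G = g almost everywhere
  have hGg : ∀ᵐ q ∂(volume.restrict S), G q = (g q : ℂ) := by
    have hvint : IntegrableOn (fun q : ℝ => G q - (g q : ℂ)) S := hGint.sub hg.ofReal
    have hvcoef : ∀ j : ℤ,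
        ∫ q in S, (G q - (g q : ℂ)) * Complex.exp (-Complex.I * j * q) = 0 := by
      intro j
      simp_rw [sub_mul]
      rw [integral_sub (hGexpint j) (hgexpint j), hGcoef j, hgval j, sub_self]
    have := vanish_of_fourier_zero hvint hvcoef
    filter_upwards [this] with q hq
    exact sub_eq_zero.mp hq
  -- the main swap
  set F : ℤ → ℝ → ℂ := fun l q =>
    (c l * Complex.exp (-Complex.I * ((m - l : ℤ) : ℂ) * q)) * (f q : ℂ) with hF
  have hFint : ∀ l : ℤ, Integrable (F l) (volume.restrict S) := by
    intro l
    refine Integrable.bdd_mul hf.ofReal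
      ((continuous_const.mul (cont_myexp (m - l))).aestronglyMeasurable) (c := ‖c l‖) (Filter.Eventually.of_forall fun q => ?_)
    rw [norm_mul, norm_myexp, mul_one]
  have hFnorm : Summable fun l : ℤ => ∫ q in S, ‖F l q‖ := by
    apply (hcsum.mul_right (∫ q in S, ‖f q‖)).congr
    intro l
    rw [hF]
    simp_rw [norm_mul, norm_myexp, mul_one, Complex.norm_real]
    rw [integral_const_mul]
  have hkey := hasSum_integral_of_summable_integral_norm hFint hFnorm
  have hinner : ∀ q : ℝ, (∑' l : ℤ, F l q)
      = G q * (Complex.exp (-Complex.I * m * q) * (f q : ℂ)) := by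
    intro q
    have h1 : ∀ l : ℤ, F l q = (c l * Complex.exp (Complex.I * l * q)) *
        (Complex.exp (-Complex.I * m * q) * (f q : ℂ)) := by
      intro l
      rw [hF]
      calc (c l * Complex.exp (-Complex.I * ((m - l : ℤ) : ℂ) * q)) * (f q : ℂ)
          = c l * (Complex.exp (Complex.I * l * q) * Complex.exp (-Complex.I * m * q))
            * (f q : ℂ) := by rw [exp_combine]
        _ = (c l * Complex.exp (Complex.I * l * q)) *
            (Complex.exp (-Complex.I * m * q) * (f q : ℂ)) := by ring
    calc (∑' l : ℤ, F l q)
        = ∑' l : ℤ, (c l * Complex.exp (Complex.I * l * q)) *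
            (Complex.exp (-Complex.I * m * q) * (f q : ℂ)) := tsum_congr h1
      _ = G q * (Complex.exp (-Complex.I * m * q) * (f q : ℂ)) := by
          rw [tsum_mul_right, hG]
  have hval : ∫ q in S, (∑' l : ℤ, F l q) = if m = 0 then (2 * Real.pi : ℂ) else 0 := by
    have h2 : ∫ q in S, (∑' l : ℤ, F l q) = ∫ q in S, Complex.exp (-Complex.I * m * q) := by
      apply integral_congr_ae
      filter_upwards [hGg, hfg] with q h1 h2
      rw [hinner q, h1]
      have h3 : ((f q : ℂ) * (g q : ℂ)) = 1 := by exact_mod_cast h2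
      calc (g q : ℂ) * (Complex.exp (-Complex.I * m * q) * (f q : ℂ))
          = Complex.exp (-Complex.I * m * q) * ((f q : ℂ) * (g q : ℂ)) := by ring
        _ = Complex.exp (-Complex.I * m * q) := by rw [h3, mul_one]
    rw [h2, integral_myexp]
  rw [hval] at hkey
  have hconv : (fun l : ℤ => ∫ q in S, F l q) = fun l : ℤ => c l *
      ∫ q in S, (f q : ℂ) * Complex.exp (-Complex.I * ((m - l : ℤ) : ℂ) * q) := by
    funext l
    rw [← integral_const_mul]
    apply integral_congr_ae
    apply Filter.Eventually.of_forall
    intro q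
    rw [hF]
    ring
  rw [hconv] at hkey
  exact hkey

/-- Given a unitary `A`, a vector `φ₀`, a real integrable function `f` on
`[0, 2π)` whose Fourier coefficients are the overlaps `⟪A^j φ₀, φ₀⟫`, and a real
integrable `g` with `f·g = 1` a.e. whose Fourier coefficients `c_l` are absolutely
summable, the operator `X = ∑ c_k A^k` (norm convergent) produces vectors
`Ψ_n = A^n X φ₀` biorthogonal to the family `{A^k φ₀}`. -/
theorem stmt4 {H : Type*} [NormedAddCommGroup H] [InnerProductSpace ℂ H] [CompleteSpace H]
    (A : unitary (H →L[ℂ] H)) (φ₀ : H) (f g : ℝ → ℝ)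
    (hf : IntegrableOn f (Set.Ico 0 (2 * Real.pi)))
    (hg : IntegrableOn g (Set.Ico 0 (2 * Real.pi)))
    (hfcoef : ∀ j : ℤ,
      (1 / (2 * Real.pi) : ℂ) *
          ∫ p in Set.Ico (0:ℝ) (2 * Real.pi), (f p : ℂ) * Complex.exp (-Complex.I * j * p) =
        ⟪((A ^ j : unitary (H →L[ℂ] H)) : H →L[ℂ] H) φ₀, φ₀⟫_ℂ)
    (hfg : ∀ᵐ p ∂(volume.restrict (Set.Ico (0:ℝ) (2 * Real.pi))), f p * g p = 1)
    (c : ℤ → ℂ)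
    (hc : ∀ l : ℤ, c l = (1 / (2 * Real.pi) : ℂ) *
        ∫ p in Set.Ico (0:ℝ) (2 * Real.pi), (g p : ℂ) * Complex.exp (-Complex.I * l * p))
    (hcsum : Summable fun l : ℤ => ‖c l‖)
    (X : H →L[ℂ] H)
    (hX : HasSum (fun k : ℤ => c k • ((A ^ k : unitary (H →L[ℂ] H)) : H →L[ℂ] H)) X)
    (Ψ : ℤ → H)
    (hΨ : ∀ n : ℤ, Ψ n = ((A ^ n : unitary (H →L[ℂ] H)) : H →L[ℂ] H) (X φ₀)) :
    ∀ n k : ℤ, ⟪Ψ n, ((A ^ k : unitary (H →L[ℂ] H)) : H →L[ℂ] H) φ₀⟫_ℂ =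
      if n = k then 1 else 0 := by
  intro n k
  set m : ℤ := k - n with hm
  -- powers of A and overlaps
  have hAA : ∀ (a b : ℤ) (x y : H),
      ⟪((A ^ a : unitary (H →L[ℂ] H)) : H →L[ℂ] H) x,
       ((A ^ b : unitary (H →L[ℂ] H)) : H →L[ℂ] H) y⟫_ℂ =
      ⟪((A ^ (a - b) : unitary (H →L[ℂ] H)) : H →L[ℂ] H) x, y⟫_ℂ := by
    intro a b x y
    have h1 : (A ^ a : unitary (H →L[ℂ] H)) = A ^ b * A ^ (a - b) := by
      rw [← zpow_add]; congr 1; omega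
    rw [h1]
    have h2 : ((A ^ b * A ^ (a - b) : unitary (H →L[ℂ] H)) : H →L[ℂ] H) x
        = ((A ^ b : unitary (H →L[ℂ] H)) : H →L[ℂ] H)
            (((A ^ (a - b) : unitary (H →L[ℂ] H)) : H →L[ℂ] H) x) := rfl
    rw [h2, Unitary.inner_map_map]
  -- the sum applied to φ₀
  have hXφ : HasSum (fun l : ℤ => c l • (((A ^ l : unitary (H →L[ℂ] H)) : H →L[ℂ] H) φ₀))
      (X φ₀) := by
    have := (ContinuousLinearMap.apply ℂ H φ₀).hasSum hX
    simpa using this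
  -- inner products with A^m φ₀
  have h1 : HasSum
      (fun l : ℤ => ⟪((A ^ m : unitary (H →L[ℂ] H)) : H →L[ℂ] H) φ₀,
        c l • (((A ^ l : unitary (H →L[ℂ] H)) : H →L[ℂ] H) φ₀)⟫_ℂ)
      ⟪((A ^ m : unitary (H →L[ℂ] H)) : H →L[ℂ] H) φ₀, X φ₀⟫_ℂ :=
    (innerSL ℂ (((A ^ m : unitary (H →L[ℂ] H)) : H →L[ℂ] H) φ₀)).hasSum hXφ
  have h1' : HasSum
      (fun l : ℤ => c l * ((1 / (2 * Real.pi) : ℂ) *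
        ∫ q in Set.Ico (0:ℝ) (2 * Real.pi),
          (f q : ℂ) * Complex.exp (-Complex.I * ((m - l : ℤ) : ℂ) * q)))
      ⟪((A ^ m : unitary (H →L[ℂ] H)) : H →L[ℂ] H) φ₀, X φ₀⟫_ℂ := by
    have heq : (fun l : ℤ => ⟪((A ^ m : unitary (H →L[ℂ] H)) : H →L[ℂ] H) φ₀,
        c l • (((A ^ l : unitary (H →L[ℂ] H)) : H →L[ℂ] H) φ₀)⟫_ℂ)
        = fun l : ℤ => c l * ((1 / (2 * Real.pi) : ℂ) *
          ∫ q in Set.Ico (0:ℝ) (2 * Real.pi),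
            (f q : ℂ) * Complex.exp (-Complex.I * ((m - l : ℤ) : ℂ) * q)) := by
      funext l
      rw [inner_smul_right, hAA m l, hfcoef (m - l)]
    rw [← heq]
    exact h1
  -- the analytic identity
  have h2 : HasSum
      (fun l : ℤ => c l * ((1 / (2 * Real.pi) : ℂ) *
        ∫ q in Set.Ico (0:ℝ) (2 * Real.pi),
          (f q : ℂ) * Complex.exp (-Complex.I * ((m - l : ℤ) : ℂ) * q)))
      (if m = 0 then 1 else 0) := by
    have h3 := (key_hasSum f g hf hg hfg c hc hcsum m).mul_left ((1 / (2 * Real.pi) : ℂ))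
    have h4 : (1 / (2 * Real.pi) : ℂ) * (if m = 0 then (2 * Real.pi : ℂ) else 0)
        = if m = 0 then 1 else 0 := by
      split
      · rw [one_div, inv_mul_cancel₀ (by simp [Real.pi_ne_zero])]
      · rw [mul_zero]
    rw [h4] at h3
    have heq2 : (fun l : ℤ => (1 / (2 * Real.pi) : ℂ) * (c l * ∫ q in Set.Ico (0:ℝ) (2 * Real.pi), (f q : ℂ) * Complex.exp (-Complex.I * ((m - l : ℤ) : ℂ) * q))) = fun l : ℤ => c l * ((1 / (2 * Real.pi) : ℂ) * ∫ q in Set.Ico (0:ℝ) (2 * Real.pi), (f q : ℂ) * Complex.exp (-Complex.I * ((m - l : ℤ) : ℂ) * q)) := by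
      funext l
      ring
    rw [heq2] at h3
    exact h3
  have hval : ⟪((A ^ m : unitary (H →L[ℂ] H)) : H →L[ℂ] H) φ₀, X φ₀⟫_ℂ
      = if m = 0 then 1 else 0 := h1'.unique h2
  rw [hΨ n, ← inner_conj_symm, hAA k n, ← hm, hval]
  rcases eq_or_ne n k with h | h
  · rw [if_pos (show m = 0 by omega), if_pos h, map_one]
  · rw [if_neg (show m ≠ 0 by omega), if_neg h, map_zero]
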